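/- Let A, B be square complex matrices whose spectra both lie in the closed left half-plane, and suppose ‖(sI − A)^{−1}‖ ≤ |s|^{−1} and ‖(sI − B)^{−1}‖ ≤ |s|^{−1} for all s on a contour Γ encircling both spectra. Then ‖exp(A) − exp(B)‖ ≤ C‖A − B‖ for a constant C depending only on the contour Γ. -/

import Mathlib

open scoped Matrix.Norms.L2Operator

open MeasureTheory Real
open scoped ENNReal NNReal

section AuxNorm

variable {𝔸 : Type*} [NormedRing 𝔸] [NormedAlgebra ℂ 𝔸] [CompleteSpace 𝔸]

private lemma circle_exp_int_aux (m : ℤ) (hm : m ≠ 0) :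
    ∫ θ in (0:ℝ)..(2*π), Complex.exp ((m * Complex.I) * θ) = 0 := by
  have hc : (m : ℂ) * Complex.I ≠ 0 := by
    simp [Complex.I_ne_zero, hm]
  rw [integral_exp_mul_complex hc]
  have h1 : (m : ℂ) * Complex.I * ((2*π : ℝ) : ℂ) = (m : ℤ) * (2 * π * Complex.I) := by
    push_cast; ring
  have h2 : (m : ℂ) * Complex.I * ((0:ℝ) : ℂ) = 0 := by push_cast; ring
  rw [h1, h2, Complex.exp_int_mul_two_pi_mul_I, Complex.exp_zero, sub_self, zero_div]

/-- If the spectrum of `a` lies inside the circle of radius `r` and the resolvent is bounded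
by `r⁻¹` on the circle, then `‖a‖ ≤ r`.  This is the Cauchy-integral bound
`a = (2πi)⁻¹ ∮ s (s - a)⁻¹ ds`. -/
theorem aux_norm_le {a : 𝔸} {r : ℝ} (hr : 0 < r)
    (hspec : ∀ μ ∈ spectrum ℂ a, ‖μ‖ < r)
    (hres : ∀ s : ℂ, ‖s‖ = r → ‖Ring.inverse (s • (1:𝔸) - a)‖ ≤ r⁻¹) :
    ‖a‖ ≤ r := by
  -- Step 1: spectral radius strictly less than r
  have hρ : spectralRadius ℂ a < ENNReal.ofReal r := by
    rcases (spectrum ℂ a).eq_empty_or_nonempty with h | h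
    · rw [spectralRadius, h]
      simpa using ENNReal.ofReal_pos.mpr hr
    · obtain ⟨μ₀, hμ₀, hmax⟩ :=
        (spectrum.isCompact a).exists_isMaxOn h continuous_norm.continuousOn
      have h1 : spectralRadius ℂ a ≤ ENNReal.ofReal ‖μ₀‖ := by
        rw [spectralRadius]
        refine iSup₂_le fun k hk => ?_
        rw [← ENNReal.ofReal_coe_nnreal, coe_nnnorm]
        exact ENNReal.ofReal_le_ofReal (hmax hk)
      exact h1.trans_lt (ENNReal.ofReal_lt_ofReal_iff hr |>.mpr (hspec μ₀ hμ₀))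
  -- Step 2: Neumann series facts
  obtain ⟨u, hu1, hu2⟩ := exists_between (ENNReal.inv_lt_inv.mpr hρ)
  lift u to NNReal using (hu2.trans_le le_top).ne
  have hu0 : (0:ℝ≥0∞) < u := lt_of_le_of_lt (zero_le) hu1
  have hupos : 0 < u := by exact_mod_cast hu0
  have H₁ := (spectrum.differentiableOn_inverse_one_sub_smul hu2).hasFPowerSeriesOnBall hupos
  have H₂ := (spectrum.hasFPowerSeriesOnBall_inverse_one_sub_smul ℂ a).exchange_radius H₁
  have htNN : ((r.toNNReal⁻¹ : ℝ≥0) : ℝ≥0∞) < (u : ℝ≥0∞) := by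
    rw [ENNReal.coe_inv (by simp [Real.toNNReal_eq_zero.not.mpr]; positivity)]
    exact hu1
  have hsum : Summable fun n => ‖a ^ n‖ * (r⁻¹) ^ n := by
    have hs := FormalMultilinearSeries.summable_norm_mul_pow _ (htNN.trans_le H₂.r_le)
    have hco : ((r.toNNReal⁻¹ : ℝ≥0) : ℝ) = r⁻¹ := by
      simp [Real.coe_toNNReal _ hr.le]
    simpa [ContinuousMultilinearMap.norm_mkPiRing, hco] using hs
  have hHS : ∀ z : ℂ, ‖z‖ = r⁻¹ → HasSum (fun n => z ^ n • a ^ n) (Ring.inverse (1 - z • a)) := by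
    intro z hz
    have hzmem : z ∈ Metric.eball (0:ℂ) u := by
      rw [Metric.mem_eball, edist_zero_right]
      have h : ‖z‖₊ = r.toNNReal⁻¹ := by
        ext
        simp [coe_nnnorm, hz, Real.coe_toNNReal _ hr.le]
      rw [enorm_eq_nnnorm, h]; exact htNN
    have := H₂.hasSum hzmem
    simpa [ContinuousMultilinearMap.mkPiRing_apply] using this
  -- Step 3: Neumann series of the resolvent on the circle, and units
  have hRS : ∀ s : ℂ, ‖s‖ = r →
      HasSum (fun n => (s⁻¹) ^ (n+1) • a ^ n) (Ring.inverse (s • (1:𝔸) - a)) ∧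
      IsUnit (s • (1:𝔸) - a) := by
    intro s hsnorm
    have hs0 : s ≠ 0 := by
      intro h; rw [h, norm_zero] at hsnorm; exact hr.ne hsnorm
    have hzn : ‖s⁻¹‖ = r⁻¹ := by rw [norm_inv, hsnorm]
    have hbase := hHS s⁻¹ hzn
    have hnn : ((‖s⁻¹‖₊ : ℝ≥0∞)) < (spectralRadius ℂ a)⁻¹ := by
      have h1 : (‖s⁻¹‖₊ : ℝ≥0∞) = (ENNReal.ofReal r)⁻¹ := by
        rw [← ENNReal.ofReal_coe_nnreal, coe_nnnorm, hzn, ← ENNReal.ofReal_inv_of_pos hr]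
      rw [h1]
      exact ENNReal.inv_lt_inv.mpr hρ
    have hx : IsUnit ((1:𝔸) - s⁻¹ • a) := spectrum.isUnit_one_sub_smul_of_lt_inv_radius hnn
    set y := Ring.inverse ((1:𝔸) - s⁻¹ • a) with hy
    have hy1 : ((1:𝔸) - s⁻¹ • a) * y = 1 := Ring.mul_inverse_cancel _ hx
    have hy2 : y * ((1:𝔸) - s⁻¹ • a) = 1 := Ring.inverse_mul_cancel _ hx
    have hfact : s • (1:𝔸) - a = s • ((1:𝔸) - s⁻¹ • a) := by
      rw [smul_sub, smul_smul, mul_inv_cancel₀ hs0, one_smul]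
    have hmul1 : (s • (1:𝔸) - a) * (s⁻¹ • y) = 1 := by
      rw [hfact, smul_mul_assoc, mul_smul_comm, smul_smul, mul_inv_cancel₀ hs0, one_smul, hy1]
    have hmul2 : (s⁻¹ • y) * (s • (1:𝔸) - a) = 1 := by
      rw [hfact, smul_mul_assoc, mul_smul_comm, smul_smul, inv_mul_cancel₀ hs0, one_smul, hy2]
    constructor
    · have hinv : Ring.inverse (s • (1:𝔸) - a) = s⁻¹ • y := by
        have := Ring.inverse_unit (⟨s • (1:𝔸) - a, s⁻¹ • y, hmul1, hmul2⟩ : 𝔸ˣ)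
        simpa using this
      rw [hinv]
      refine HasSum.congr_fun (hbase.const_smul (s⁻¹)) fun n => ?_
      rw [smul_smul, ← pow_succ']
    · exact ⟨⟨s • (1:𝔸) - a, s⁻¹ • y, hmul1, hmul2⟩, rfl⟩
  -- Step 4: the contour integral
  set sf : ℝ → ℂ := fun θ => (r:ℂ) * Complex.exp (θ * Complex.I) with hsf
  have hsnorm : ∀ θ, ‖sf θ‖ = r := by
    intro θ
    rw [hsf]
    simp only [norm_mul, Complex.norm_real, Real.norm_eq_abs,
      Complex.norm_exp_ofReal_mul_I, mul_one, abs_of_pos hr]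
  have hs0 : ∀ θ, sf θ ≠ 0 := fun θ h => by
    have := hsnorm θ; rw [h, norm_zero] at this; exact hr.ne this
  set c : ℕ → ℝ → ℂ := fun n θ => (sf θ)^2 * ((sf θ)⁻¹)^(n+1) with hc
  set F : ℕ → ℝ → 𝔸 := fun n θ => c n θ • a ^ n with hF
  have hccont : ∀ n, Continuous (c n) := by
    intro n
    have h1 : Continuous sf :=
      continuous_const.mul (Complex.continuous_exp.comp (Complex.continuous_ofReal.mul continuous_const))
    exact ((h1.pow 2).mul ((h1.inv₀ hs0).pow (n+1)))
  have hcnorm : ∀ n θ, ‖c n θ‖ = r^2 * (r⁻¹)^(n+1) := by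
    intro n θ
    rw [hc]
    simp only [norm_mul, norm_pow, norm_inv, hsnorm]
  have hFint : ∀ n, Integrable (F n) (volume.restrict (Set.Ioc 0 (2*π))) := by
    intro n
    exact ((hccont n).smul continuous_const).integrableOn_Ioc
  have hFnormsum : Summable fun n => ∫ θ in Set.Ioc 0 (2*π), ‖F n θ‖ := by
    have hcomp : ∀ n, (∫ θ in Set.Ioc 0 (2*π), ‖F n θ‖)
        = (2*π) * (r * (‖a ^ n‖ * (r⁻¹)^n)) := by
      intro n
      have h : ∀ θ, ‖F n θ‖ = r^2 * (r⁻¹)^(n+1) * ‖a ^ n‖ := by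
        intro θ; rw [hF]; simp only [norm_smul, hcnorm]
      calc (∫ θ in Set.Ioc 0 (2*π), ‖F n θ‖)
          = ∫ _θ in Set.Ioc 0 (2*π), (r^2 * (r⁻¹)^(n+1) * ‖a ^ n‖) := by
            simp only [h]
        _ = (2*π) * (r * (‖a ^ n‖ * (r⁻¹)^n)) := by
            rw [setIntegral_const, Real.volume_real_Ioc_of_le (by positivity), sub_zero]
            simp only [smul_eq_mul, pow_succ]
            field_simp
    rw [funext hcomp]
    exact ((hsum.mul_left r).mul_left (2*π))
  have hkey := MeasureTheory.hasSum_integral_of_summable_integral_norm hFint hFnormsum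
  have hpt : ∀ θ : ℝ, ∑' n, F n θ = (sf θ)^2 • Ring.inverse (sf θ • (1:𝔸) - a) := by
    intro θ
    have h1 := ((hRS (sf θ) (hsnorm θ)).1).const_smul ((sf θ)^2)
    have h2 : HasSum (fun n => F n θ) ((sf θ)^2 • Ring.inverse (sf θ • (1:𝔸) - a)) := by
      refine HasSum.congr_fun h1 fun n => ?_
      rw [hF, hc, smul_smul]
    exact h2.tsum_eq
  have hint : ∀ n, (∫ θ in Set.Ioc 0 (2*π), F n θ)
      = if n = 1 then ((2*π : ℝ) : ℂ) • a else 0 := by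
    intro n
    have h0 : (∫ θ in Set.Ioc 0 (2*π), F n θ) = (∫ θ in (0:ℝ)..(2*π), c n θ) • a ^ n := by
      rw [← intervalIntegral.integral_smul_const,
        intervalIntegral.integral_of_le (by positivity : (0:ℝ) ≤ 2*π)]
    have hcrw : ∀ θ : ℝ, c n θ =
        ((r:ℂ)^2 * ((r:ℂ)⁻¹)^(n+1)) * Complex.exp ((((1 - n : ℤ) : ℂ) * Complex.I) * θ) := by
      intro θ
      have hu : Complex.exp (θ * Complex.I) ≠ 0 := Complex.exp_ne_zero _
      rw [hc]
      simp only
      rw [mul_pow, mul_inv, mul_pow]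
      have hzp : Complex.exp (θ * Complex.I) ^ 2 * (Complex.exp (θ * Complex.I))⁻¹^(n+1)
          = Complex.exp (θ * Complex.I) ^ ((2 : ℤ) + (-(n+1) : ℤ)) := by
        rw [zpow_add₀ hu, zpow_neg, inv_pow]
        norm_cast
      have hexp : Complex.exp (θ * Complex.I) ^ ((2 : ℤ) + (-(n+1) : ℤ))
          = Complex.exp ((((1 - n : ℤ) : ℂ) * Complex.I) * θ) := by
        rw [← Complex.exp_int_mul]
        congr 1
        push_cast
        ring
      calc (r:ℂ)^2 * Complex.exp (θ * Complex.I)^2 *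
            (((r:ℂ)⁻¹)^(n+1) * ((Complex.exp (θ * Complex.I))⁻¹)^(n+1))
          = ((r:ℂ)^2 * ((r:ℂ)⁻¹)^(n+1)) *
            (Complex.exp (θ * Complex.I) ^ 2 * (Complex.exp (θ * Complex.I))⁻¹^(n+1)) := by ring
        _ = _ := by rw [hzp, hexp]
    rcases eq_or_ne n 1 with hn | hn
    · subst hn
      rw [h0]
      have h : (∫ θ in (0:ℝ)..(2*π), c 1 θ) = ((2*π : ℝ) : ℂ) := by
        have hone : ∀ θ ∈ Set.uIcc (0:ℝ) (2*π), c 1 θ = (1:ℂ) := by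
          intro θ _
          have h10 : ((1 - (1:ℕ) : ℤ) : ℂ) = 0 := by norm_num
          rw [hcrw θ, h10, zero_mul, zero_mul, Complex.exp_zero, mul_one, inv_pow,
            mul_inv_cancel₀ (pow_ne_zero _ (by exact_mod_cast hr.ne' : (r:ℂ) ≠ 0))]
        rw [intervalIntegral.integral_congr hone]
        simp [intervalIntegral.integral_const, Complex.real_smul]
      rw [h]
      simp [pow_one]
    · rw [h0]
      have h : (∫ θ in (0:ℝ)..(2*π), c n θ) = 0 := by
        rw [intervalIntegral.integral_congr (g := fun θ =>
          ((r:ℂ)^2 * ((r:ℂ)⁻¹)^(n+1)) * Complex.exp ((((1 - n : ℤ) : ℂ) * Complex.I) * θ))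
          (fun θ _ => hcrw θ)]
        rw [intervalIntegral.integral_const_mul, circle_exp_int_aux (1 - n) (by omega), mul_zero]
      rw [h, zero_smul, if_neg hn]
  have hsingle : HasSum (fun n => ∫ θ in Set.Ioc 0 (2*π), F n θ) (((2*π : ℝ) : ℂ) • a) := by
    rw [funext hint]
    exact hasSum_ite_eq 1 _
  have hval : (∫ θ in Set.Ioc 0 (2*π), ∑' n, F n θ) = ((2*π : ℝ) : ℂ) • a :=
    hkey.unique hsingle
  have hgmeas : Continuous fun θ : ℝ => (sf θ)^2 • Ring.inverse (sf θ • (1:𝔸) - a) := by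
    have h1 : Continuous sf :=
      continuous_const.mul (Complex.continuous_exp.comp (Complex.continuous_ofReal.mul continuous_const))
    have h2 : Continuous fun θ : ℝ => sf θ • (1:𝔸) - a :=
      (h1.smul continuous_const).sub continuous_const
    refine (h1.pow 2).smul (continuous_iff_continuousAt.mpr fun θ => ?_)
    have hu := (hRS (sf θ) (hsnorm θ)).2
    have h3 : ContinuousAt (Ring.inverse : 𝔸 → 𝔸) (sf θ • (1:𝔸) - a) := by
      have := NormedRing.inverse_continuousAt hu.unit
      rwa [hu.unit_spec] at this
    exact ContinuousAt.comp (f := fun θ : ℝ => sf θ • (1:𝔸) - a) h3 h2.continuousAt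
  have hval2 : (∫ θ in Set.Ioc 0 (2*π), (sf θ)^2 • Ring.inverse (sf θ • (1:𝔸) - a)) =
      ((2*π : ℝ) : ℂ) • a := by
    rw [← hval]
    exact setIntegral_congr_fun measurableSet_Ioc fun θ _ => (hpt θ).symm
  have hbound : ‖((2*π : ℝ) : ℂ) • a‖ ≤ r * (2*π) := by
    rw [← hval2]
    have hb := norm_setIntegral_le_of_norm_le_const (μ := volume)
      (s := Set.Ioc (0:ℝ) (2*π)) (C := r)
      (by rw [Real.volume_Ioc]; exact ENNReal.ofReal_lt_top)
      (fun θ _ => by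
        calc ‖(sf θ)^2 • Ring.inverse (sf θ • (1:𝔸) - a)‖
            = ‖(sf θ)‖^2 * ‖Ring.inverse (sf θ • (1:𝔸) - a)‖ := by
              rw [norm_smul, norm_pow]
          _ ≤ r^2 * r⁻¹ := by
              rw [hsnorm]
              exact mul_le_mul_of_nonneg_left (hres _ (hsnorm θ)) (by positivity)
          _ = r := by field_simp [sq])
    calc ‖∫ θ in Set.Ioc 0 (2*π), (sf θ)^2 • Ring.inverse (sf θ • (1:𝔸) - a)‖
        ≤ r * (volume (Set.Ioc (0:ℝ) (2*π))).toReal := hb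
      _ = r * (2*π) := by
          rw [Real.volume_Ioc, sub_zero, ENNReal.toReal_ofReal (by positivity)]
  have h2π : (0:ℝ) < 2*π := by positivity
  have hfin : (2*π) * ‖a‖ ≤ r * (2*π) := by
    calc (2*π) * ‖a‖ = ‖((2*π : ℝ) : ℂ) • a‖ := by
          rw [norm_smul, Complex.norm_real, Real.norm_eq_abs, abs_of_pos h2π]
      _ ≤ r * (2*π) := hbound
  nlinarith

end AuxNorm

/-- If the spectra of `A` and `B` lie in the closed left half-plane inside a
contour (here a circle of radius `r` centered at the origin) and the resolvents satisfy
`‖(sI - A)⁻¹‖ ≤ |s|⁻¹` and `‖(sI - B)⁻¹‖ ≤ |s|⁻¹` on the contour, then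
`‖exp A - exp B‖ ≤ C ‖A - B‖` with `C` depending only on the contour. -/
theorem exp_diff_bound (M : ℕ) (r : ℝ) (hr : 0 < r) :
    ∃ C : ℝ, 0 < C ∧ ∀ A B : Matrix (Fin M) (Fin M) ℂ,
      (∀ μ ∈ spectrum ℂ A, μ.re ≤ 0 ∧ ‖μ‖ < r) →
      (∀ μ ∈ spectrum ℂ B, μ.re ≤ 0 ∧ ‖μ‖ < r) →
      (∀ s : ℂ, ‖s‖ = r →
        ‖(s • (1 : Matrix (Fin M) (Fin M) ℂ) - A)⁻¹‖ ≤ ‖s‖⁻¹ ∧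
        ‖(s • (1 : Matrix (Fin M) (Fin M) ℂ) - B)⁻¹‖ ≤ ‖s‖⁻¹) →
      ‖NormedSpace.exp A - NormedSpace.exp B‖ ≤ C * ‖A - B‖ := by
  refine ⟨Real.exp r, Real.exp_pos r, fun A B hA hB hres => ?_⟩
  -- norm bounds from the contour hypotheses
  have hresA : ∀ s : ℂ, ‖s‖ = r →
      ‖Ring.inverse (s • (1 : Matrix (Fin M) (Fin M) ℂ) - A)‖ ≤ r⁻¹ := fun s hs => by
    rw [← Matrix.nonsing_inv_eq_ringInverse]
    simpa [hs] using (hres s hs).1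
  have hresB : ∀ s : ℂ, ‖s‖ = r →
      ‖Ring.inverse (s • (1 : Matrix (Fin M) (Fin M) ℂ) - B)‖ ≤ r⁻¹ := fun s hs => by
    rw [← Matrix.nonsing_inv_eq_ringInverse]
    simpa [hs] using (hres s hs).2
  have hnA : ‖A‖ ≤ r := aux_norm_le hr (fun μ hμ => (hA μ hμ).2) hresA
  have hnB : ‖B‖ ≤ r := aux_norm_le hr (fun μ hμ => (hB μ hμ).2) hresB
  -- bound on powers
  have hpowB : ∀ n : ℕ, 0 < n → ‖B ^ n‖ ≤ r ^ n := by
    intro n h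
    exact (norm_pow_le' B h).trans (pow_le_pow_left₀ (norm_nonneg _) hnB n)
  have hdiff : ∀ n : ℕ, ‖A ^ (n+1) - B ^ (n+1)‖ ≤ (n+1) * r ^ n * ‖A - B‖ := by
    intro n
    induction n with
    | zero => simp
    | succ m ih =>
      have hid : A ^ (m+2) - B ^ (m+2) = A * (A ^ (m+1) - B ^ (m+1)) + (A - B) * B ^ (m+1) := by
        rw [pow_succ' A (m+1), pow_succ' B (m+1), mul_sub, sub_mul]
        abel
      rw [hid]
      calc ‖A * (A ^ (m+1) - B ^ (m+1)) + (A - B) * B ^ (m+1)‖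
          ≤ ‖A * (A ^ (m+1) - B ^ (m+1))‖ + ‖(A - B) * B ^ (m+1)‖ := norm_add_le _ _
        _ ≤ ‖A‖ * ‖A ^ (m+1) - B ^ (m+1)‖ + ‖A - B‖ * ‖B ^ (m+1)‖ :=
            add_le_add (norm_mul_le _ _) (norm_mul_le _ _)
        _ ≤ r * ((m+1) * r ^ m * ‖A - B‖) + ‖A - B‖ * r ^ (m+1) := by
            refine add_le_add (mul_le_mul hnA ih (norm_nonneg _) hr.le) ?_
            exact mul_le_mul_of_nonneg_left (hpowB (m+1) m.succ_pos) (norm_nonneg _)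
        _ = (((m+1):ℕ) + 1) * r ^ (m+1) * ‖A - B‖ := by push_cast; ring
  -- the series bound
  have hsumA : Summable fun n : ℕ => ((n.factorial : ℂ))⁻¹ • A ^ n :=
    NormedSpace.expSeries_summable' (𝕂 := ℂ) A
  have hsumB : Summable fun n : ℕ => ((n.factorial : ℂ))⁻¹ • B ^ n :=
    NormedSpace.expSeries_summable' (𝕂 := ℂ) B
  have hexp : NormedSpace.exp A - NormedSpace.exp B =
      ∑' n : ℕ, (((n.factorial : ℂ))⁻¹ • A ^ n - ((n.factorial : ℂ))⁻¹ • B ^ n) := by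
    simp only [NormedSpace.exp_eq_tsum ℂ]
    exact (Summable.tsum_sub hsumA hsumB).symm
  -- the comparison series
  set h : ℕ → ℝ := fun n => ((n.factorial : ℝ))⁻¹ * (n * r ^ (n - 1)) with hh
  have hhs : HasSum h (Real.exp r) := by
    have hbase : HasSum (fun n : ℕ => r ^ n / n.factorial) (Real.exp r) := by
      have := NormedSpace.expSeries_div_hasSum_exp (𝔸 := ℝ) r
      rwa [← Real.exp_eq_exp_ℝ] at this
    have hshift : HasSum (fun n : ℕ => h (n + 1)) (Real.exp r) := by
      refine HasSum.congr_fun hbase fun n => ?_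
      rw [hh]
      simp only [Nat.factorial_succ, Nat.add_sub_cancel, Nat.cast_mul, Nat.cast_add, Nat.cast_one]
      rw [mul_inv]
      have hne : ((n:ℝ) + 1) ≠ 0 := by positivity
      field_simp
    have := (hasSum_nat_add_iff (f := h) 1).mp hshift
    simpa [hh] using this
  have hptbound : ∀ n : ℕ, ‖((n.factorial : ℂ))⁻¹ • A ^ n - ((n.factorial : ℂ))⁻¹ • B ^ n‖
      ≤ h n * ‖A - B‖ := by
    intro n
    rw [← smul_sub, norm_smul]
    have hfn : ‖((n.factorial : ℂ))⁻¹‖ = ((n.factorial : ℝ))⁻¹ := by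
      rw [norm_inv]
      simp [Complex.norm_natCast]
    rw [hfn, hh]
    rcases Nat.eq_zero_or_pos n with h0 | h0
    · subst h0; simp
    · obtain ⟨m, rfl⟩ := Nat.exists_eq_add_of_lt h0
      simp only [zero_add, Nat.add_sub_cancel]
      have := hdiff m
      calc ((m+1).factorial : ℝ)⁻¹ * ‖A ^ (m+1) - B ^ (m+1)‖
          ≤ ((m+1).factorial : ℝ)⁻¹ * ((m+1) * r ^ m * ‖A - B‖) := by
            refine mul_le_mul_of_nonneg_left ?_ (by positivity)
            exact_mod_cast hdiff m
        _ = ((m+1).factorial : ℝ)⁻¹ * (((m:ℝ)+1) * r ^ m) * ‖A - B‖ := by ring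
        _ = ((m+1).factorial : ℝ)⁻¹ * ((((m+1):ℕ):ℝ) * r ^ m) * ‖A - B‖ := by push_cast; ring
  rw [hexp]
  exact tsum_of_norm_bounded (hhs.mul_right ‖A - B‖) hptbound
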